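/- Base case: regularized TD(0) iterates stay bounded up to the mixing time. For any sequence of transitions (s_t, s_t') ∈ S × S, define w_{t+1} = w_t + η_t g^r_{s_t, s_t'}(w_t) with exponential step-sizes η_t = η₀ α^t, α = (1/T)^{1/T}, where η₀ ≤ (1−γ)/(16 ln T) and T ≥ max{3, 1/η₀}. Then for all t ≤ τ_mix, ‖w_t − w_r*‖² ≤ B(τ_mix) := exp(2(2+λ) max{a, b}) · (‖w_1 − w_r*‖ + ζ)². -/

import Mathlib

open scoped RealInnerProductSpace BigOperators

/-- The TD(0) update direction for a transition `(s, s')`: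
`g_{s,s'}(w) = (r(s) + γ ⟪w, φ s'⟫ − ⟪w, φ s⟫) φ(s)`. -/
noncomputable def tdDir {S : Type*} {d : ℕ} (φ : S → EuclideanSpace ℝ (Fin d))
    (r : S → ℝ) (γ : ℝ) (s s' : S) (w : EuclideanSpace ℝ (Fin d)) :
    EuclideanSpace ℝ (Fin d) :=
  (r s + γ * ⟪w, φ s'⟫ - ⟪w, φ s⟫) • φ s

/-- The mean-path TD(0) direction `g(w) = ∑_{s,s'} μ(s) P(s,s') g_{s,s'}(w)`. -/
noncomputable def meanDir {S : Type*} [Fintype S] {d : ℕ}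
    (P : S → S → ℝ) (μ : S → ℝ) (φ : S → EuclideanSpace ℝ (Fin d))
    (r : S → ℝ) (γ : ℝ) (w : EuclideanSpace ℝ (Fin d)) :
    EuclideanSpace ℝ (Fin d) :=
  ∑ s, ∑ s', (μ s * P s s') • tdDir φ r γ s s' w

/-- The regularized stochastic TD(0) direction `g^r_{s,s'}(w) = g_{s,s'}(w) − λ w`. -/
noncomputable def regTdDir {S : Type*} {d : ℕ} (φ : S → EuclideanSpace ℝ (Fin d))
    (r : S → ℝ) (γ lam : ℝ) (s s' : S) (w : EuclideanSpace ℝ (Fin d)) :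
    EuclideanSpace ℝ (Fin d) :=
  tdDir φ r γ s s' w - lam • w

/-- The regularized mean-path TD(0) direction `g^r(w) = g(w) − λ w`. -/
noncomputable def regMeanDir {S : Type*} [Fintype S] {d : ℕ}
    (P : S → S → ℝ) (μ : S → ℝ) (φ : S → EuclideanSpace ℝ (Fin d))
    (r : S → ℝ) (γ lam : ℝ) (w : EuclideanSpace ℝ (Fin d)) :
    EuclideanSpace ℝ (Fin d) :=
  meanDir P μ φ r γ w - lam • w

/-- One step of the distribution dynamics: `(ν P)(s') = ∑_s ν(s) P(s,s')`. -/
noncomputable def pushDist {S : Type*} [Fintype S] (P : S → S → ℝ) (ν : S → ℝ) : S → ℝ :=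
  fun s' => ∑ s, ν s * P s s'

lemma regTdDir_norm_le {S : Type*} {d : ℕ} (φ : S → EuclideanSpace ℝ (Fin d))
    (r : S → ℝ) (γ lam : ℝ) (s s' : S) (w : EuclideanSpace ℝ (Fin d))
    (hφs : ‖φ s‖ ≤ 1) (hφs' : ‖φ s'‖ ≤ 1) (hr0 : 0 ≤ r s) (hr1 : r s ≤ 1)
    (hγ0 : 0 < γ) (hγ1 : γ ≤ 1) (hlam : 0 ≤ lam) :
    ‖regTdDir φ r γ lam s s' w‖ ≤ 1 + (2 + lam) * ‖w‖ := by
  have hw : (0:ℝ) ≤ ‖w‖ := norm_nonneg _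
  have h1 : |⟪w, φ s'⟫| ≤ ‖w‖ := by
    calc |⟪w, φ s'⟫| ≤ ‖w‖ * ‖φ s'‖ := abs_real_inner_le_norm _ _
    _ ≤ ‖w‖ * 1 := by gcongr
    _ = ‖w‖ := mul_one _
  have h2 : |⟪w, φ s⟫| ≤ ‖w‖ := by
    calc |⟪w, φ s⟫| ≤ ‖w‖ * ‖φ s‖ := abs_real_inner_le_norm _ _
    _ ≤ ‖w‖ * 1 := by gcongr
    _ = ‖w‖ := mul_one _
  have hc : |r s + γ * ⟪w, φ s'⟫ - ⟪w, φ s⟫| ≤ 1 + 2 * ‖w‖ := by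
    have h3 : |γ * ⟪w, φ s'⟫| ≤ ‖w‖ := by
      rw [abs_mul, abs_of_pos hγ0]
      nlinarith [abs_nonneg ⟪w, φ s'⟫]
    calc |r s + γ * ⟪w, φ s'⟫ - ⟪w, φ s⟫| ≤ |r s| + |γ * ⟪w, φ s'⟫| + |⟪w, φ s⟫| := by
          exact (abs_sub _ _).trans (by gcongr; exact abs_add_le _ _)
    _ ≤ 1 + 2 * ‖w‖ := by rw [abs_of_nonneg hr0]; linarith
  calc ‖regTdDir φ r γ lam s s' w‖ ≤ ‖tdDir φ r γ s s' w‖ + ‖lam • w‖ := norm_sub_le _ _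
  _ ≤ |r s + γ * ⟪w, φ s'⟫ - ⟪w, φ s⟫| * ‖φ s‖ + lam * ‖w‖ := by
      rw [tdDir, norm_smul, norm_smul, Real.norm_eq_abs, Real.norm_eq_abs, abs_of_nonneg hlam]
  _ ≤ (1 + 2 * ‖w‖) * 1 + lam * ‖w‖ := by gcongr
  _ = 1 + (2 + lam) * ‖w‖ := by ring


set_option maxHeartbeats 2000000 in
/-- base case — regularized TD(0) iterates with exponential step-sizes
`η_t = η₀ α^t`, `α = (1/T)^{1/T}`, `η₀ ≤ (1−γ)/(16 ln T)`, `T ≥ max{3, 1/η₀}`, stay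
bounded up to the mixing time: for all `1 ≤ t ≤ τ_mix`,
`‖w_t − w_r*‖² ≤ B(τ_mix) = exp(2(2+λ) max{a,b}) (‖w₁ − w_r*‖ + ζ)²`. -/
theorem reg_td0_base_case_bounded
    {S : Type*} [Fintype S] {d : ℕ}
    (P : S → S → ℝ) (μ : S → ℝ) (φ : S → EuclideanSpace ℝ (Fin d))
    (r : S → ℝ) (γ lam : ℝ) (wr : EuclideanSpace ℝ (Fin d))
    (hP : ∀ s s', 0 ≤ P s s') (hProw : ∀ s, ∑ s', P s s' = 1)
    (hμ : ∀ s, 0 ≤ μ s) (hμsum : ∑ s, μ s = 1)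
    (hstat : ∀ s', ∑ s, μ s * P s s' = μ s')
    (hφ : ∀ s, ‖φ s‖ ≤ 1)
    (hr : ∀ s, 0 ≤ r s ∧ r s ≤ 1)
    (hγ : 0 < γ ∧ γ ≤ 1)
    (hlam : 0 ≤ lam)
    (hwr : regMeanDir P μ φ r γ lam wr = 0)
    -- geometric mixing with constants `m`, `ρ`, and `a = 1/ln(1/ρ)`,
    -- `b = ln(2(2+λ)m)/ln(1/ρ)`
    (m ρ : ℝ) (hm : 0 < m) (hρ : 0 < ρ ∧ ρ < 1)
    (hmix : ∀ ν : S → ℝ, (∀ s, 0 ≤ ν s) → ∑ s, ν s = 1 →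
      ∀ t : ℕ, (1 / 2) * ∑ s, |(pushDist P)^[t] ν s - μ s| ≤ m * ρ ^ t)
    (a b : ℝ)
    (ha : a = 1 / Real.log (1 / ρ))
    (hb : b = Real.log (2 * (2 + lam) * m) / Real.log (1 / ρ))
    -- horizon and exponential step-size schedule
    (T : ℕ) (η₀ α : ℝ)
    (hα : α = (1 / (T : ℝ)) ^ ((1 : ℝ) / (T : ℝ)))
    (hη₀pos : 0 < η₀)
    (hη₀ : η₀ ≤ (1 - γ) / (16 * Real.log T))
    (hT3 : (3 : ℝ) ≤ (T : ℝ)) (hTη : 1 / η₀ ≤ (T : ℝ))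
    -- the mixing time `τ_mix = min{t ∈ ℕ : m ρ^t ≤ η₀/(2(2+λ)T)}`
    (τmix : ℕ)
    (hτmix : m * ρ ^ τmix ≤ η₀ / (2 * (2 + lam) * T))
    (hτmixMin : ∀ t : ℕ, t < τmix → η₀ / (2 * (2 + lam) * T) < m * ρ ^ t)
    -- an arbitrary sequence of transitions and the corresponding iterates
    (st : ℕ → S × S) (w : ℕ → EuclideanSpace ℝ (Fin d))
    (hrec : ∀ t, 1 ≤ t →
      w (t + 1) = w t + (η₀ * α ^ t) • regTdDir φ r γ lam (st t).1 (st t).2 (w t)) :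
    ∀ t, 1 ≤ t → t ≤ τmix →
      ‖w t - wr‖ ^ 2 ≤
        Real.exp (2 * (2 + lam) * max a b) * (‖w 1 - wr‖ + max 1 ‖wr‖) ^ 2 := by
  intro t ht1 htτ
  set ζ : ℝ := max 1 ‖wr‖ with hζdef
  have hζ1 : (1:ℝ) ≤ ζ := le_max_left _ _
  have hwrζ : ‖wr‖ ≤ ζ := le_max_right _ _
  have hζ0 : (0:ℝ) ≤ ζ := by linarith
  set c : ℝ := 3 + lam with hcdef
  have hc0 : (0:ℝ) ≤ c := by simp only [hcdef]; linarith
  have hT0 : (0:ℝ) < T := by linarith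
  -- step size facts
  have hα0 : 0 < α := by rw [hα]; exact Real.rpow_pos_of_pos (by positivity) _
  have hα1 : α ≤ 1 := by
    rw [hα]
    exact Real.rpow_le_one (by positivity) (by rw [div_le_one hT0]; linarith) (by positivity)
  -- log T facts
  have hlogT1 : (1:ℝ) ≤ Real.log T := by
    rw [Real.le_log_iff_exp_le hT0]
    have := Real.exp_one_lt_d9
    linarith
  have hη16' : η₀ ≤ 1 / (16 * Real.log T) := by
    refine hη₀.trans ?_
    gcongr
    linarith
  have hη16 : η₀ ≤ 1 / 16 := by
    refine hη16'.trans ?_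
    rw [div_le_div_iff₀ (by linarith) (by norm_num)]
    linarith
  have hηlogT : η₀ * Real.log T ≤ 1 / 16 := by
    have := mul_le_mul_of_nonneg_right hη16' (by linarith : (0:ℝ) ≤ Real.log T)
    calc η₀ * Real.log T ≤ 1 / (16 * Real.log T) * Real.log T := this
    _ = 1 / 16 := by field_simp
  -- one-step bound
  have hstep : ∀ u : ℕ, 1 ≤ u →
      ‖w (u+1) - wr‖ + ζ ≤ (1 + c * η₀) * (‖w u - wr‖ + ζ) := by
    intro u hu
    set g := regTdDir φ r γ lam (st u).1 (st u).2 (w u) with hgdef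
    have hη : (0:ℝ) ≤ η₀ * α ^ u := by positivity
    have hη' : η₀ * α ^ u ≤ η₀ := by
      have h : α ^ u ≤ 1 := pow_le_one₀ hα0.le hα1
      nlinarith
    have hg := regTdDir_norm_le φ r γ lam (st u).1 (st u).2 (w u)
      (hφ _) (hφ _) (hr _).1 (hr _).2 hγ.1 hγ.2 hlam
    have hwu : ‖w u‖ ≤ ‖w u - wr‖ + ‖wr‖ := by
      calc ‖w u‖ = ‖(w u - wr) + wr‖ := by rw [sub_add_cancel]
      _ ≤ _ := norm_add_le _ _
    have hgc : ‖g‖ ≤ c * (‖w u - wr‖ + ζ) := by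
      simp only [hcdef]
      nlinarith [mul_le_mul_of_nonneg_left hwu (show (0:ℝ) ≤ 2 + lam by linarith),
        mul_le_mul_of_nonneg_left hwrζ (show (0:ℝ) ≤ 2 + lam by linarith),
        norm_nonneg (w u - wr)]
    have e' : ‖w (u+1) - wr‖ ≤ ‖w u - wr‖ + (η₀ * α ^ u) * ‖g‖ := by
      rw [hrec u hu, ← sub_add_eq_add_sub]
      calc ‖(w u - wr) + (η₀ * α ^ u) • g‖ ≤ ‖w u - wr‖ + ‖(η₀ * α ^ u) • g‖ :=
            norm_add_le _ _
      _ = ‖w u - wr‖ + (η₀ * α ^ u) * ‖g‖ := by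
            rw [norm_smul, Real.norm_eq_abs, abs_of_nonneg hη]
    have hmm : (η₀ * α ^ u) * ‖g‖ ≤ η₀ * (c * (‖w u - wr‖ + ζ)) :=
      mul_le_mul hη' hgc (norm_nonneg _) hη₀pos.le
    calc ‖w (u+1) - wr‖ + ζ ≤ ‖w u - wr‖ + ζ + η₀ * (c * (‖w u - wr‖ + ζ)) := by
          linarith
    _ = (1 + c * η₀) * (‖w u - wr‖ + ζ) := by ring
  -- induction bound
  have hD : ∀ u : ℕ, 1 ≤ u →
      ‖w u - wr‖ + ζ ≤ Real.exp (c * η₀ * ((u:ℝ) - 1)) * (‖w 1 - wr‖ + ζ) := by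
    intro u hu
    induction u, hu using Nat.le_induction with
    | base => norm_num
    | succ u hu ih =>
      have h2 : (1 + c * η₀) ≤ Real.exp (c * η₀) := by
        have := Real.add_one_le_exp (c * η₀); linarith
      have hnn : (0:ℝ) ≤ ‖w u - wr‖ + ζ := by positivity
      calc ‖w (u+1) - wr‖ + ζ ≤ (1 + c * η₀) * (‖w u - wr‖ + ζ) := hstep u hu
      _ ≤ Real.exp (c * η₀) * (Real.exp (c * η₀ * ((u:ℝ) - 1)) * (‖w 1 - wr‖ + ζ)) :=
          mul_le_mul h2 ih hnn (Real.exp_nonneg _)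
      _ = Real.exp (c * η₀ * (((u+1 : ℕ):ℝ) - 1)) * (‖w 1 - wr‖ + ζ) := by
          rw [← mul_assoc, ← Real.exp_add]
          congr 1
          push_cast
          ring
  -- mixing-time bound
  have hτ1 : 1 ≤ τmix := le_trans ht1 htτ
  set k : ℕ := τmix - 1 with hkdef
  have hk := hτmixMin k (by omega)
  set L : ℝ := Real.log (1 / ρ) with hLdef
  have hL0 : 0 < L := Real.log_pos (by rw [one_div]; exact (one_lt_inv₀ hρ.1).mpr hρ.2)
  have hρlog : Real.log ρ = -L := by rw [hLdef, one_div, Real.log_inv, neg_neg]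
  have hA0 : (0:ℝ) < 2 * (2 + lam) := by linarith
  have hlog1 : Real.log (η₀ / (2 * (2 + lam) * T)) < Real.log (m * ρ ^ k) :=
    Real.log_lt_log (by positivity) hk
  rw [Real.log_div (ne_of_gt hη₀pos) (mul_ne_zero (ne_of_gt hA0) (ne_of_gt hT0)),
    Real.log_mul (ne_of_gt hA0) (ne_of_gt hT0),
    Real.log_mul (ne_of_gt hm) (pow_ne_zero _ (ne_of_gt hρ.1)), Real.log_pow, hρlog] at hlog1
  have hηinv : -Real.log η₀ ≤ Real.log T := by
    rw [← Real.log_inv]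
    apply Real.log_le_log (by positivity)
    rwa [← one_div]
  have hbL : b * L = Real.log (2 * (2 + lam)) + Real.log m := by
    rw [hb, div_mul_cancel₀ _ (ne_of_gt hL0),
      Real.log_mul (ne_of_gt hA0) (ne_of_gt hm)]
  have hkL : (k:ℝ) * L ≤ b * L + 2 * Real.log T := by
    rw [hbL]; push_cast at hlog1 ⊢; linarith
  have hkb : (k:ℝ) ≤ b + 2 * a * Real.log T := by
    rw [ha]
    have h1 : (k:ℝ) ≤ (b * L + 2 * Real.log T) / L := (le_div_iff₀ hL0).mpr hkL
    have h2 : (b * L + 2 * Real.log T) / L = b + 2 * (1 / L) * Real.log T := by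
      field_simp
    linarith
  have ha0 : (0:ℝ) < a := by rw [ha]; positivity
  set M : ℝ := max a b with hMdef
  have haM : a ≤ M := le_max_left _ _
  have hbM : b ≤ M := le_max_right _ _
  have hM0 : (0:ℝ) ≤ M := le_trans ha0.le haM
  have hηb : η₀ * b ≤ M / 16 := by
    rcases le_or_gt b 0 with hb0 | hb0
    · have : η₀ * b ≤ 0 := mul_nonpos_of_nonneg_of_nonpos hη₀pos.le hb0
      linarith
    · nlinarith
  have hηa : 2 * η₀ * a * Real.log T ≤ M / 8 := by
    nlinarith [mul_le_mul_of_nonneg_left hηlogT ha0.le]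
  have hηk : η₀ * (k:ℝ) ≤ 3 / 16 * M := by
    have := mul_le_mul_of_nonneg_left hkb hη₀pos.le
    nlinarith
  -- conclude
  have htk : ((t:ℝ) - 1) ≤ (k:ℝ) := by
    have : ((k:ℕ):ℝ) = (τmix:ℝ) - 1 := by
      rw [hkdef, Nat.cast_sub hτ1]; norm_num
    rw [this]
    have : (t:ℝ) ≤ (τmix:ℝ) := by exact_mod_cast htτ
    linarith
  have hexp : 2 * (c * η₀ * ((t:ℝ) - 1)) ≤ 2 * (2 + lam) * M := by
    have h1 : c * η₀ * ((t:ℝ) - 1) ≤ c * (η₀ * (k:ℝ)) := by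
      rw [mul_assoc]
      exact mul_le_mul_of_nonneg_left
        (mul_le_mul_of_nonneg_left htk hη₀pos.le) hc0
    have h2 : c * (η₀ * (k:ℝ)) ≤ c * (3 / 16 * M) :=
      mul_le_mul_of_nonneg_left hηk hc0
    have h3 : c * (3 / 16 * M) ≤ (2 + lam) * M := by
      rw [hcdef]; nlinarith [mul_nonneg hlam hM0]
    clear_value c M
    linarith
  have hfin := hD t ht1
  have h1 : ‖w t - wr‖ ≤ ‖w t - wr‖ + ζ := le_add_of_nonneg_right hζ0
  calc ‖w t - wr‖ ^ 2 ≤ (Real.exp (c * η₀ * ((t:ℝ) - 1)) * (‖w 1 - wr‖ + ζ)) ^ 2 :=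
        pow_le_pow_left₀ (norm_nonneg _) (h1.trans hfin) 2
  _ = Real.exp (2 * (c * η₀ * ((t:ℝ) - 1))) * (‖w 1 - wr‖ + ζ) ^ 2 := by
      rw [mul_pow, ← Real.exp_nat_mul]
      norm_num
  _ ≤ Real.exp (2 * (2 + lam) * M) * (‖w 1 - wr‖ + ζ) ^ 2 := by
      gcongr
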